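/- Let H ⪰ 0 be symmetric, g ≠ 0, and let g_y(μ) = μ/‖(H+μI)^{-1}g‖ for μ > 0. Suppose μ_l < μ_u satisfy g_y(μ_l) = M and g_y(μ_u) = 2M for some M > 0. Then μ_u − μ_l ≥ (M/2)·‖(H + μ_u I)^{-1} g‖. -/

import Mathlib

open Real

private lemma euclid_lower {n : ℕ} (H : Matrix (Fin n) (Fin n) ℝ) (hH : H.PosSemidef)
    {μ : ℝ} (hμ : 0 < μ) (y : Fin n → ℝ) :
    μ * ‖(WithLp.equiv 2 (Fin n → ℝ)).symm y‖ ≤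
      ‖(WithLp.equiv 2 (Fin n → ℝ)).symm ((H + μ • 1).mulVec y)‖ := by
  set Y := (WithLp.equiv 2 (Fin n → ℝ)).symm y with hY
  set Z := (WithLp.equiv 2 (Fin n → ℝ)).symm ((H + μ • 1).mulVec y) with hZ
  have hself : (inner ℝ Y Y : ℝ) = dotProduct y y := by
    rw [hY, WithLp.equiv_symm_apply, EuclideanSpace.inner_toLp_toLp]; simp
  have hdot : (inner ℝ Y Z : ℝ) = dotProduct y (H.mulVec y) + μ * dotProduct y y := by
    rw [hY, hZ, WithLp.equiv_symm_apply, EuclideanSpace.inner_toLp_toLp]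
    simp [Matrix.add_mulVec, dotProduct_add, Matrix.smul_mulVec,
      Matrix.one_mulVec, dotProduct_smul, smul_eq_mul, dotProduct_comm]
  have hpos : 0 ≤ dotProduct y (H.mulVec y) := by
    have := hH.dotProduct_mulVec_nonneg y
    simpa using this
  have h1 : μ * ‖Y‖ ^ 2 ≤ (inner ℝ Y Z : ℝ) := by
    rw [hdot]
    have : ‖Y‖ ^ 2 = dotProduct y y := by
      rw [← real_inner_self_eq_norm_sq, hself]
    nlinarith
  have h2 : (inner ℝ Y Z : ℝ) ≤ ‖Y‖ * ‖Z‖ := real_inner_le_norm Y Z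
  rcases eq_or_lt_of_le (norm_nonneg Y) with h | h
  · rw [← h]; simpa using norm_nonneg Z
  · have : μ * ‖Y‖ ^ 2 ≤ ‖Y‖ * ‖Z‖ := le_trans h1 h2
    nlinarith

/-- For `H ⪰ 0` symmetric, `g ≠ 0`, `g_y(μ) = μ/‖(H+μI)⁻¹g‖`: if `μ_l < μ_u`,
`g_y(μ_l) = M` and `g_y(μ_u) = 2M` with `M > 0`, then
`μ_u − μ_l ≥ (M/2)‖(H + μ_u I)⁻¹ g‖`. -/
theorem stmt8 {n : ℕ} (H : Matrix (Fin n) (Fin n) ℝ) (g : Fin n → ℝ) (M μl μu : ℝ)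
    (hH : H.PosSemidef) (hg : g ≠ 0) (hM : 0 < M)
    (h0 : 0 < μl) (hlu : μl < μu)
    (hl : μl / ‖(WithLp.equiv 2 (Fin n → ℝ)).symm ((H + μl • 1)⁻¹.mulVec g)‖ = M)
    (hu : μu / ‖(WithLp.equiv 2 (Fin n → ℝ)).symm ((H + μu • 1)⁻¹.mulVec g)‖ = 2 * M) :
    μu - μl ≥ M / 2 * ‖(WithLp.equiv 2 (Fin n → ℝ)).symm ((H + μu • 1)⁻¹.mulVec g)‖ := by
  set B := H + μl • 1 with hBdef
  set A := H + μu • 1 with hAdef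
  have hBpd : B.PosDef := by
    rw [hBdef, Matrix.smul_one_eq_diagonal]
    exact Matrix.PosDef.posSemidef_add hH (Matrix.PosDef.diagonal (fun _ => h0))
  have hApd : A.PosDef := by
    rw [hAdef, Matrix.smul_one_eq_diagonal]
    exact Matrix.PosDef.posSemidef_add hH (Matrix.PosDef.diagonal (fun _ => lt_trans h0 hlu))
  have hBdet : IsUnit B.det := isUnit_iff_ne_zero.mpr (ne_of_gt hBpd.det_pos)
  have hAdet : IsUnit A.det := isUnit_iff_ne_zero.mpr (ne_of_gt hApd.det_pos)
  set v : Fin n → ℝ := B⁻¹.mulVec g with hv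
  set w : Fin n → ℝ := A⁻¹.mulVec g with hw
  have hAB : A = B + (μu - μl) • 1 := by
    rw [hAdef, hBdef, add_assoc, ← add_smul]; ring_nf
  have hAw : A.mulVec w = g := by
    rw [hw, Matrix.mulVec_mulVec, Matrix.mul_nonsing_inv A hAdet, Matrix.one_mulVec]
  have hdecomp : v = w + (μu - μl) • B⁻¹.mulVec w := by
    rw [hv, ← hAw, hAB, Matrix.add_mulVec, Matrix.smul_mulVec, Matrix.one_mulVec,
      Matrix.mulVec_add, Matrix.mulVec_smul, Matrix.mulVec_mulVec,
      Matrix.nonsing_inv_mul B hBdet, Matrix.one_mulVec]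
  have hBw : B.mulVec (B⁻¹.mulVec w) = w := by
    rw [Matrix.mulVec_mulVec, Matrix.mul_nonsing_inv B hBdet, Matrix.one_mulVec]
  -- key lower bound for the middle term
  have hkey : μl * ‖(WithLp.equiv 2 (Fin n → ℝ)).symm (B⁻¹.mulVec w)‖ ≤
      ‖(WithLp.equiv 2 (Fin n → ℝ)).symm w‖ := by
    have hk := euclid_lower H hH h0 (B⁻¹.mulVec w)
    rw [← hBdef, hBw] at hk
    exact hk
  -- triangle inequality
  have hnorm : ‖(WithLp.equiv 2 (Fin n → ℝ)).symm v‖ ≤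
      ‖(WithLp.equiv 2 (Fin n → ℝ)).symm w‖ +
        (μu - μl) * ‖(WithLp.equiv 2 (Fin n → ℝ)).symm (B⁻¹.mulVec w)‖ := by
    rw [hdecomp]
    calc ‖(WithLp.equiv 2 (Fin n → ℝ)).symm (w + (μu - μl) • B⁻¹.mulVec w)‖
        = ‖(WithLp.equiv 2 (Fin n → ℝ)).symm w +
            (μu - μl) • (WithLp.equiv 2 (Fin n → ℝ)).symm (B⁻¹.mulVec w)‖ := by
          rw [WithLp.equiv_symm_apply, WithLp.toLp_add, WithLp.toLp_smul]
      _ ≤ _ := by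
          refine le_trans (norm_add_le _ _) ?_
          rw [norm_smul, Real.norm_eq_abs, abs_of_pos (by linarith)]
  set a := ‖(WithLp.equiv 2 (Fin n → ℝ)).symm v‖ with ha
  set b := ‖(WithLp.equiv 2 (Fin n → ℝ)).symm w‖ with hb
  set c := ‖(WithLp.equiv 2 (Fin n → ℝ)).symm (B⁻¹.mulVec w)‖ with hc
  have hbne : b ≠ 0 := by
    intro hb0
    rw [hb0, div_zero] at hu
    linarith
  have hane : a ≠ 0 := by
    intro ha0
    rw [ha0, div_zero] at hl
    linarith
  have haval : a = μl / M := by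
    field_simp at hl ⊢
    linarith
  have hbval : b = μu / (2 * M) := by
    field_simp at hu ⊢
    linarith
  have hchain : μl * a ≤ μu * b := by
    have hcnn : 0 ≤ c := norm_nonneg _
    nlinarith
  rw [haval, hbval] at hchain
  rw [ge_iff_le, hbval]
  have h2 : μl ^ 2 * 2 ≤ μu ^ 2 := by
    rw [← mul_div_assoc, ← mul_div_assoc, div_le_div_iff₀ hM (by positivity)] at hchain
    nlinarith
  have h3 : M / 2 * (μu / (2 * M)) = μu / 4 := by
    field_simp
    ring
  rw [h3, div_le_iff₀ (by norm_num : (0:ℝ) < 4)]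
  nlinarith [sq_nonneg (3 * μu - 4 * μl)]
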